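/- Let α < 0 and β ∈ (0,1), and let I = (0, −β/α). Suppose u : ℝ → ℝ is differentiable on I with derivative u′, u′ is differentiable on I with derivative u″, u′(q) > 0 for all q ∈ I, and (αq+1)·q·u″(q) + (αq+β)·u′(q) = 0 for all q ∈ I (i.e., u has LFRRA with σ = 1: −q·u″(q)/u′(q) = (αq+β)/(αq+1)). Then there exist K > 0 and C ∈ ℝ such that u(q) = C + K·∫₀^q s^{−β}·(1+αs)^{β−1} ds for all q ∈ I. (Up to the substitution t = −αs, the integral is the incomplete beta function B(−αq, 1−β, β)/(−α)^{1−β}.) -/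

import Mathlib

open Set intervalIntegral

private lemma const_of_deriv_zero {s : Set ℝ} (hc : Convex ℝ s) (ho : IsOpen s)
    {f : ℝ → ℝ} (h : ∀ x ∈ s, HasDerivAt f 0 x) {x y : ℝ}
    (hx : x ∈ s) (hy : y ∈ s) : f x = f y := by
  apply hc.is_const_of_fderivWithin_eq_zero
    (fun z hz => ((h z hz).differentiableAt).differentiableWithinAt) _ hx hy
  intro z hz
  rw [fderivWithin_of_isOpen ho hz, (h z hz).hasFDerivAt.fderiv]
  ext
  simp

/-- LFRRA with `σ = 1` (and `α < 0`, `β ∈ (0,1)`) implies the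
(incomplete beta) utility `u(q) = C + K·∫₀^q s^(−β)·(1+αs)^(β−1) ds` on the
interval `(0, −β/α)`. -/
theorem lfrra_sigma_one_incomplete_beta
    (α β : ℝ) (hα : α < 0) (hβ : β ∈ Set.Ioo (0:ℝ) 1)
    (u u' u'' : ℝ → ℝ)
    (hu : ∀ q ∈ Set.Ioo (0:ℝ) (-β/α), HasDerivAt u (u' q) q)
    (hu' : ∀ q ∈ Set.Ioo (0:ℝ) (-β/α), HasDerivAt u' (u'' q) q)
    (hpos : ∀ q ∈ Set.Ioo (0:ℝ) (-β/α), 0 < u' q)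
    (hode : ∀ q ∈ Set.Ioo (0:ℝ) (-β/α),
      (α * q + 1) * q * u'' q + (α * q + β) * u' q = 0) :
    ∃ K : ℝ, 0 < K ∧ ∃ C : ℝ, ∀ q ∈ Set.Ioo (0:ℝ) (-β/α),
      u q = C + K * ∫ s in (0:ℝ)..q, s ^ (-β) * (1 + α * s) ^ (β - 1) := by
  obtain ⟨hβ0, hβ1⟩ := hβ
  have hb : (0:ℝ) < -β/α := div_pos_of_neg_of_neg (by linarith) hα
  set I : Set ℝ := Set.Ioo (0:ℝ) (-β/α) with hI
  -- basic facts on I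
  have hqβ : ∀ q ∈ I, 0 < α * q + β := by
    intro q hq
    have h2 : α * (-β/α) < α * q := mul_lt_mul_of_neg_left hq.2 hα
    have h3 : α * (-β/α) = -β := by rw [mul_comm, div_mul_cancel₀ _ (ne_of_lt hα)]
    linarith
  have hq1 : ∀ q ∈ I, 0 < 1 + α * q := by
    intro q hq
    have := hqβ q hq
    linarith
  -- the auxiliary function g
  set P : ℝ → ℝ := fun q => q ^ β * (1 + α * q) ^ (1 - β) with hP
  set g : ℝ → ℝ := fun q => u' q * P q with hg
  have hPpos : ∀ q ∈ I, 0 < P q := fun q hq =>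
    mul_pos (Real.rpow_pos_of_pos hq.1 _) (Real.rpow_pos_of_pos (hq1 q hq) _)
  -- g has derivative zero on I
  have hgd : ∀ q ∈ I, HasDerivAt g 0 q := by
    intro q hq
    have hq0 : 0 < q := hq.1
    have h1 : 0 < 1 + α * q := hq1 q hq
    have hd1 : HasDerivAt (fun q : ℝ => q ^ β) (β * q ^ (β - 1)) q :=
      Real.hasDerivAt_rpow_const (Or.inl hq0.ne')
    have hbase : HasDerivAt (fun q : ℝ => 1 + α * q) α q := by
      exact (((hasDerivAt_id q).const_mul α).const_add (1:ℝ)).congr_deriv (mul_one α)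
    have hd2 : HasDerivAt (fun q : ℝ => (1 + α * q) ^ (1 - β))
        (α * (1 - β) * (1 + α * q) ^ (1 - β - 1)) q :=
      hbase.rpow_const (Or.inl h1.ne')
    have hPd : HasDerivAt P
        (β * q ^ (β - 1) * (1 + α * q) ^ (1 - β)
          + q ^ β * (α * (1 - β) * (1 + α * q) ^ (1 - β - 1))) q := hd1.mul hd2
    have hgd' : HasDerivAt g
        (u'' q * P q + u' q * (β * q ^ (β - 1) * (1 + α * q) ^ (1 - β)
          + q ^ β * (α * (1 - β) * (1 + α * q) ^ (1 - β - 1)))) q :=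
      (hu' q hq).mul hPd
    have hqA : q ^ β = q ^ (β - 1) * q := by
      rw [← Real.rpow_add_one hq0.ne', sub_add_cancel]
    have hBe : (1:ℝ) - β - 1 = -β := by ring
    have hB : (1 + α * q) ^ (1 - β) = (1 + α * q) ^ (-β) * (1 + α * q) := by
      rw [← Real.rpow_add_one h1.ne', neg_add_eq_sub]
    have hz : u'' q * P q + u' q * (β * q ^ (β - 1) * (1 + α * q) ^ (1 - β)
          + q ^ β * (α * (1 - β) * (1 + α * q) ^ (1 - β - 1))) = 0 := by
      rw [hBe]
      have hodeq := hode q hq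
      calc u'' q * P q + u' q * (β * q ^ (β - 1) * (1 + α * q) ^ (1 - β)
          + q ^ β * (α * (1 - β) * (1 + α * q) ^ (-β)))
          = q ^ (β - 1) * (1 + α * q) ^ (-β) *
            ((α * q + 1) * q * u'' q + (α * q + β) * u' q) := by
            simp only [hP]
            rw [hqA, hB]; ring
        _ = 0 := by rw [hodeq, mul_zero]
    rw [← hz]
    exact hgd'
  -- g is constant; its value is K
  have hIconv : Convex ℝ I := convex_Ioo _ _
  have hIopen : IsOpen I := isOpen_Ioo
  set q₀ : ℝ := (-β/α) / 2 with hq₀def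
  have hq₀ : q₀ ∈ I := ⟨by positivity, by linarith⟩
  set K : ℝ := g q₀ with hK
  have hKpos : 0 < K := mul_pos (hpos q₀ hq₀) (hPpos q₀ hq₀)
  have hgK : ∀ q ∈ I, g q = K := fun q hq =>
    const_of_deriv_zero hIconv hIopen hgd hq hq₀
  -- hence u' q = K * f q
  set f : ℝ → ℝ := fun s => s ^ (-β) * (1 + α * s) ^ (β - 1) with hf
  have hu'eq : ∀ q ∈ I, u' q = K * f q := by
    intro q hq
    have h1 : 0 < 1 + α * q := hq1 q hq
    have hPq : 0 < P q := hPpos q hq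
    have hthis : u' q * P q = K := hgK q hq
    have hfP : f q = (P q)⁻¹ := by
      rw [hf, hP, mul_inv, ← Real.rpow_neg hq.1.le, ← Real.rpow_neg h1.le]
      norm_num
    rw [hfP]
    field_simp
    linarith [hthis]
  -- continuity facts for f
  have hcontAt : ∀ q ∈ I, ContinuousAt f q := by
    intro q hq
    have h1 : 0 < 1 + α * q := hq1 q hq
    exact (Real.continuousAt_rpow_const q (-β) (Or.inl hq.1.ne')).mul
      (((continuous_const.add (continuous_const.mul continuous_id)).continuousAt).rpow_const
        (Or.inl h1.ne'))
  -- interval integrability of f on [0, q]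
  have hInt : ∀ q ∈ I, IntervalIntegrable f MeasureTheory.volume 0 q := by
    intro q hq
    have huIcc : Set.uIcc (0:ℝ) q = Set.Icc 0 q := Set.uIcc_of_le hq.1.le
    have hcont : ContinuousOn (fun s : ℝ => (1 + α * s) ^ (β - 1)) (Set.uIcc (0:ℝ) q) := by
      apply ContinuousOn.rpow_const
      · exact (continuous_const.add (continuous_const.mul continuous_id)).continuousOn
      · intro s hs
        rw [huIcc] at hs
        left
        have : α * q ≤ α * s := mul_le_mul_of_nonpos_left hs.2 hα.le
        have := hq1 q hq
        nlinarith
    exact (intervalIntegral.intervalIntegrable_rpow' (by linarith)).mul_continuousOn hcont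
  -- the antiderivative F
  set F : ℝ → ℝ := fun q => ∫ s in (0:ℝ)..q, f s with hF
  have hFd : ∀ q ∈ I, HasDerivAt F (f q) q := by
    intro q hq
    exact intervalIntegral.integral_hasDerivAt_right (hInt q hq)
      (ContinuousAt.stronglyMeasurableAtFilter hIopen hcontAt q hq) (hcontAt q hq)
  -- u - K * F is constant
  set h : ℝ → ℝ := fun q => u q - K * F q with hh
  have hhd : ∀ q ∈ I, HasDerivAt h 0 q := by
    intro q hq
    have : HasDerivAt h (u' q - K * f q) q := (hu q hq).sub ((hFd q hq).const_mul K)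
    rwa [hu'eq q hq, sub_self] at this
  refine ⟨K, hKpos, u q₀ - K * F q₀, fun q hq => ?_⟩
  have h2 : h q = h q₀ := const_of_deriv_zero hIconv hIopen hhd hq hq₀
  simp only [hh, hF, hf] at h2 ⊢
  linarith
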